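/- Let F_a and F_b be real polynomials of total degree at most 3 in two variables, and let p = (c,d) ∈ ℝ² be a base point of the pencil, i.e. F_a(c,d) = 0 and F_b(c,d) = 0. Then for every (u,v) ∈ ℝ² at which −2G₁ − G₂ ≠ 0, the point (x,y) = ι_p(u,v) (the generalised Manin involution with degree parameter D = 3, so z = 2G₁/(−2G₁ − G₂)) satisfies F_a(x,y)·F_b(u,v) = F_a(u,v)·F_b(x,y); that is, ι_p maps each curve of the cubic pencil αF_a + βF_b = 0 to itself. -/

import Mathlib

open MvPolynomial

/-- Evaluation of a bivariate polynomial at a point of the plane. -/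
noncomputable def pev (F : MvPolynomial (Fin 2) ℝ) (w : ℝ × ℝ) : ℝ :=
  eval ![w.1, w.2] F

/-- First directional quantity `F⁽¹⁾ = (c−u)Fᵤ + (d−v)Fᵥ` at `w = (u,v)`, direction point `p = (c,d)`. -/
noncomputable def d1 (F : MvPolynomial (Fin 2) ℝ) (p w : ℝ × ℝ) : ℝ :=
  (p.1 - w.1) * pev (pderiv (0 : Fin 2) F) w + (p.2 - w.2) * pev (pderiv (1 : Fin 2) F) w

/-- Second directional quantity `F⁽²⁾` at `w = (u,v)`, direction point `p = (c,d)`. -/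
noncomputable def d2 (F : MvPolynomial (Fin 2) ℝ) (p w : ℝ × ℝ) : ℝ :=
  (p.1 - w.1) ^ 2 * pev (pderiv (0 : Fin 2) (pderiv (0 : Fin 2) F)) w
    + 2 * (p.1 - w.1) * (p.2 - w.2) * pev (pderiv (1 : Fin 2) (pderiv (0 : Fin 2) F)) w
    + (p.2 - w.2) ^ 2 * pev (pderiv (1 : Fin 2) (pderiv (1 : Fin 2) F)) w

/-- `G₁ = F_a·F_b⁽¹⁾ − F_a⁽¹⁾·F_b`. -/
noncomputable def G1 (Fa Fb : MvPolynomial (Fin 2) ℝ) (p w : ℝ × ℝ) : ℝ :=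
  pev Fa w * d1 Fb p w - d1 Fa p w * pev Fb w

/-- `G₂ = F_a·F_b⁽²⁾ − F_a⁽²⁾·F_b`. -/
noncomputable def G2 (Fa Fb : MvPolynomial (Fin 2) ℝ) (p w : ℝ × ℝ) : ℝ :=
  pev Fa w * d2 Fb p w - d2 Fa p w * pev Fb w

/-- The defining denominator `2(2−D)G₁ − G₂` of the generalised Manin involution. -/
noncomputable def den (Fa Fb : MvPolynomial (Fin 2) ℝ) (D : ℕ) (p w : ℝ × ℝ) : ℝ :=
  2 * (2 - (D : ℝ)) * G1 Fa Fb p w - G2 Fa Fb p w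

/-- The generalised Manin involution `ι_p(u,v) = (u,v) + z·(p − (u,v))`
with `z = 2G₁ / (2(2−D)G₁ − G₂)`. -/
noncomputable def manin (Fa Fb : MvPolynomial (Fin 2) ℝ) (D : ℕ) (p w : ℝ × ℝ) : ℝ × ℝ :=
  w + (2 * G1 Fa Fb p w / den Fa Fb D p w) • (p - w)

lemma pev_add' (F G : MvPolynomial (Fin 2) ℝ) (w : ℝ × ℝ) :
    pev (F + G) w = pev F w + pev G w := by simp [pev]

lemma d1_add' (F G : MvPolynomial (Fin 2) ℝ) (p w : ℝ × ℝ) :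
    d1 (F + G) p w = d1 F p w + d1 G p w := by
  simp [d1, pev, map_add]; ring

lemma d2_add' (F G : MvPolynomial (Fin 2) ℝ) (p w : ℝ × ℝ) :
    d2 (F + G) p w = d2 F p w + d2 G p w := by
  simp [d2, pev, map_add]; ring

def TaylorEq (F : MvPolynomial (Fin 2) ℝ) (p w : ℝ × ℝ) : Prop :=
  ∀ t : ℝ, pev F (w + t • (p - w)) =
      pev F w + t * d1 F p w + t ^ 2 / 2 * d2 F p w
        + t ^ 3 * (pev F p - pev F w - d1 F p w - d2 F p w / 2)


lemma taylorEq_zero (p w : ℝ × ℝ) : TaylorEq 0 p w := by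
  intro t; simp [pev, d1, d2]

lemma taylorEq_add {F G : MvPolynomial (Fin 2) ℝ} {p w : ℝ × ℝ}
    (hF : TaylorEq F p w) (hG : TaylorEq G p w) : TaylorEq (F + G) p w := by
  intro t
  rw [pev_add', pev_add', pev_add', d1_add', d2_add', hF t, hG t]
  ring

set_option maxHeartbeats 2000000 in
lemma mono_taylor (i j : ℕ) (hij : i + j ≤ 3) (c : ℝ) (p w : ℝ × ℝ) :
    TaylorEq (C c * X 0 ^ i * X 1 ^ j) p w := by
  intro t
  have hi : i ≤ 3 := le_trans (Nat.le_add_right _ _) hij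
  have hj : j ≤ 3 - i := by omega
  interval_cases i <;> interval_cases j <;>
    simp only [pow_succ, pow_zero, one_mul, pev, d1, d2, pderiv_C_mul, pderiv_mul,
      pderiv_X_self, pderiv_X_of_ne, pderiv_C, map_mul, map_add, map_one, map_zero, eval_C, eval_X,
      Prod.fst_add, Prod.snd_add, Prod.smul_fst, Prod.smul_snd,
      Prod.fst_sub, Prod.snd_sub, smul_eq_mul, mul_one, mul_zero, zero_mul, add_zero, zero_add,
      Matrix.cons_val_zero, Matrix.cons_val_one, Matrix.head_cons, Fin.isValue,
      ne_eq, zero_ne_one, not_false_eq_true, one_ne_zero] <;> ring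

lemma sum_taylor (s : Finset (Fin 2 →₀ ℕ)) (f : (Fin 2 →₀ ℕ) → ℝ)
    (h : ∀ m ∈ s, m 0 + m 1 ≤ 3) (p w : ℝ × ℝ) :
    TaylorEq (∑ m ∈ s, monomial m (f m)) p w := by
  induction s using Finset.induction with
  | empty => simpa using taylorEq_zero p w
  | @insert m s hx ih =>
    rw [Finset.sum_insert hx]
    refine taylorEq_add ?_ (ih fun m' hm' => h m' (Finset.mem_insert_of_mem hm'))
    have hmono : (monomial m (f m) : MvPolynomial (Fin 2) ℝ)
        = C (f m) * X 0 ^ m 0 * X 1 ^ m 1 := by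
      rw [monomial_eq, Finsupp.prod_pow, Fin.prod_univ_two, mul_assoc]
    rw [hmono]
    exact mono_taylor _ _ (h m (Finset.mem_insert_self _ _)) _ p w

lemma taylor (F : MvPolynomial (Fin 2) ℝ) (hF : F.totalDegree ≤ 3) (p w : ℝ × ℝ) :
    TaylorEq F p w := by
  have hrepr : F = ∑ m ∈ F.support, monomial m (F.coeff m) :=
    (MvPolynomial.support_sum_monomial_coeff F).symm
  have hdeg : ∀ m ∈ F.support, m 0 + m 1 ≤ 3 := by
    intro m hm
    have h1 : m.sum (fun _ e => e) ≤ F.totalDegree := MvPolynomial.le_totalDegree hm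
    have h2 : m.sum (fun _ e => e) = m 0 + m 1 := by
      rw [Finsupp.sum_fintype _ _ (fun _ => rfl), Fin.sum_univ_two]
    omega
  rw [hrepr]
  exact sum_taylor _ _ hdeg p w

/-- For a cubic pencil (total degrees ≤ 3) with base point `p`
(`F_a(p) = F_b(p) = 0`), the generalised Manin involution with `D = 3` maps each
curve of the pencil to itself, wherever its defining denominator `−2G₁ − G₂`
(which is `den Fa Fb 3 p w`) is nonzero. -/
theorem manin_involution_preserves_cubic_pencil
    (Fa Fb : MvPolynomial (Fin 2) ℝ)
    (hFa : Fa.totalDegree ≤ 3) (hFb : Fb.totalDegree ≤ 3)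
    (p : ℝ × ℝ) (hpa : pev Fa p = 0) (hpb : pev Fb p = 0)
    (w : ℝ × ℝ) (hden : den Fa Fb 3 p w ≠ 0) :
    pev Fa (manin Fa Fb 3 p w) * pev Fb w = pev Fa w * pev Fb (manin Fa Fb 3 p w) := by
  have ha := taylor Fa hFa p w (2 * G1 Fa Fb p w / den Fa Fb 3 p w)
  have hb := taylor Fb hFb p w (2 * G1 Fa Fb p w / den Fa Fb 3 p w)
  have hden' := hden
  simp only [manin]
  rw [ha, hb, hpa, hpb]
  have hD : den Fa Fb 3 p w = 2 * (2 - 3) * G1 Fa Fb p w - G2 Fa Fb p w := by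
    simp only [den, Nat.cast_ofNat]
  generalize den Fa Fb 3 p w = D at hden hD ⊢
  field_simp
  rw [hD]
  simp only [G1, G2]
  ring
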